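/- arXiv:2304.13138 — 2 statements merged into one kernel-verified Lean document; each statement's English description precedes it below -/
import Mathlib

section
/- Let X ⊆ ℝ^d be convex, φ : ℝ^d → ℝ differentiable and 1-strongly convex with respect to a norm ‖·‖, f continuously differentiable, x₀ ∈ X, η > 0, and let x⁺ minimize x ↦ η⟨∇f(x₀), x⟩ + D_φ(x, x₀) over X. If x⁺ ≠ x₀, then ⟨∇f(x₀), x⁺ − x₀⟩ ≤ −(1/η)‖x⁺ − x₀‖² < 0. -/
open RealInnerProductSpace

/-- The mirror descent step makes negative correlation with the gradient,
quantified by the squared norm of the displacement. -/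
theorem mirror_descent_negative_correlation {d : ℕ}
    (X : Set (EuclideanSpace ℝ (Fin d))) (hXconv : Convex ℝ X)
    (f φ : EuclideanSpace ℝ (Fin d) → ℝ)
    (hf : ContDiff ℝ 1 f) (hφ : Differentiable ℝ φ)
    (N : EuclideanSpace ℝ (Fin d) → ℝ)
    (hN0 : ∀ z, 0 ≤ N z) (hNdef : ∀ z, N z = 0 → z = 0)
    (hNhom : ∀ (c : ℝ) z, N (c • z) = |c| * N z)
    (hNtri : ∀ y z, N (y + z) ≤ N y + N z)
    (hSC : ∀ x y, φ x + ⟪gradient φ x, y - x⟫ + (1/2) * (N (y - x))^2 ≤ φ y)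
    (x₀ : EuclideanSpace ℝ (Fin d)) (hx₀ : x₀ ∈ X)
    (η : ℝ) (hη : 0 < η)
    (D : EuclideanSpace ℝ (Fin d) → EuclideanSpace ℝ (Fin d) → ℝ)
    (hD : ∀ x y, D x y = φ x - φ y - ⟪gradient φ y, x - y⟫)
    (xp : EuclideanSpace ℝ (Fin d)) (hxpX : xp ∈ X)
    (hmin : ∀ x ∈ X, η * ⟪gradient f x₀, xp⟫ + D xp x₀ ≤ η * ⟪gradient f x₀, x⟫ + D x x₀)
    (hne : xp ≠ x₀) :
    ⟪gradient f x₀, xp - x₀⟫ ≤ -(1/η) * (N (xp - x₀))^2 ∧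
      -(1/η) * (N (xp - x₀))^2 < 0 := by
  set g := gradient f x₀ with hg
  set n := N (xp - x₀) with hn
  -- n > 0
  have hnpos : 0 < n := by
    rcases lt_or_eq_of_le (hN0 (xp - x₀)) with h | h
    · exact h
    · exfalso; exact hne (sub_eq_zero.mp (hNdef _ h.symm))
  have hNneg : N (x₀ - xp) = n := by
    have := hNhom (-1) (xp - x₀)
    simpa [neg_smul, one_smul, neg_sub] using this
  set q : ℝ := ⟪g, x₀ - xp⟫ with hq
  have hqval : ⟪g, xp - x₀⟫ = -q := by
    rw [hq, ← inner_neg_right, neg_sub]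
  set p : ℝ := ⟪gradient φ x₀, xp - x₀⟫ with hp
  -- key inequality for each t ∈ (0,1]
  have key : ∀ t : ℝ, 0 < t → t ≤ 1 →
      0 ≤ η * q - D xp x₀ - ((1 - t)/2) * n^2 := by
    intro t ht ht1
    set m := xp + t • (x₀ - xp) with hm
    have hmX : m ∈ X := by
      have hcomb := hXconv hxpX hx₀ (by linarith : (0:ℝ) ≤ 1 - t) (le_of_lt ht)
        (by ring)
      have : m = (1 - t) • xp + t • x₀ := by
        rw [hm]; module
      rw [this]; exact hcomb
    -- norms of differences
    have hxm : xp - m = (-t) • (x₀ - xp) := by rw [hm]; module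
    have hx0m : x₀ - m = (1 - t) • (x₀ - xp) := by rw [hm]; module
    have hNxm : N (xp - m) = t * n := by
      rw [hxm, hNhom, abs_of_neg (by linarith : (-t) < 0), hNneg]; ring
    have hNx0m : N (x₀ - m) = (1 - t) * n := by
      rw [hx0m, hNhom, abs_of_nonneg (by linarith : (0:ℝ) ≤ 1 - t), hNneg]
    -- strong convexity applied twice
    have h1 := hSC m xp
    have h2 := hSC m x₀
    rw [hNxm] at h1
    rw [hNx0m] at h2
    have hin1 : ⟪gradient φ m, xp - m⟫ = (-t) * ⟪gradient φ m, x₀ - xp⟫ := by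
      rw [hxm, inner_smul_right]
    have hin2 : ⟪gradient φ m, x₀ - m⟫ = (1 - t) * ⟪gradient φ m, x₀ - xp⟫ := by
      rw [hx0m, inner_smul_right]
    rw [hin1] at h1
    rw [hin2] at h2
    -- combination: (1-t) * h1 + t * h2
    have hφm : φ m + (t * (1 - t)/2) * n^2 ≤ (1 - t) * φ xp + t * φ x₀ := by
      have e1 := mul_le_mul_of_nonneg_left h1 (by linarith : (0:ℝ) ≤ 1 - t)
      have e2 := mul_le_mul_of_nonneg_left h2 (le_of_lt ht)
      nlinarith [e1, e2]
    -- optimality at m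
    have hopt := hmin m hmX
    have hinm : ⟪g, m⟫ = ⟪g, xp⟫ + t * q := by
      rw [hm, inner_add_right, inner_smul_right, hq]
    have hDm : D m x₀ = φ m - φ x₀ - (1 - t) * p := by
      rw [hD, hp]
      have : m - x₀ = (1 - t) • (xp - x₀) := by rw [hm]; module
      rw [this, inner_smul_right]
    have hDxp : D xp x₀ = φ xp - φ x₀ - p := by rw [hD, hp]
    rw [hinm, hDm, hDxp] at hopt
    -- divide out by t
    have hA : t * 0 ≤ t * (η * q - D xp x₀ - ((1 - t)/2) * n^2) := by
      rw [hDxp, mul_zero]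
      have e1 : (0:ℝ) ≤ η * (t * q) + φ m - φ xp + t * p := by linarith
      have e2 : (0:ℝ) ≤ (1 - t) * φ xp + t * φ x₀ - (t * (1 - t)/2) * n^2 - φ m := by
        linarith
      linarith [add_nonneg e1 e2]
    exact le_of_mul_le_mul_left hA ht
  -- take t → 0 : 0 ≤ η*q - D xp x₀ - (1/2)*n^2
  have hlim : 0 ≤ η * q - D xp x₀ - (1/2) * n^2 := by
    by_contra hC
    push_neg at hC
    set C := η * q - D xp x₀ - (1/2) * n^2 with hCdef
    have hCneg : C < 0 := hC
    set t : ℝ := min 1 ((-C) / n^2) with htdef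
    have hn2 : 0 < n^2 := by positivity
    have ht : 0 < t := lt_min one_pos (div_pos (neg_pos.mpr hCneg) hn2)
    have ht1 : t ≤ 1 := min_le_left _ _
    have h := key t ht ht1
    have h2 : t ≤ (-C) / n^2 := min_le_right _ _
    have h3 : t * n^2 ≤ -C := by
      rw [div_eq_mul_inv] at h2
      calc t * n^2 ≤ ((-C) * (n^2)⁻¹) * n^2 := by nlinarith
        _ = -C := by field_simp
    have h4 : 0 < t * n ^ 2 := mul_pos ht hn2
    clear_value t C n q g
    nlinarith [h, h3, hCneg]
  -- D xp x₀ ≥ (1/2) n^2 by strong convexity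
  have hDge : (1/2) * n^2 ≤ D xp x₀ := by
    have := hSC x₀ xp
    rw [hD, ← hp]
    rw [← hn] at this
    linarith
  have hmain : η * ⟪g, xp - x₀⟫ ≤ -n^2 := by
    rw [hqval]; linarith
  constructor
  · have hle : ⟪g, xp - x₀⟫ ≤ (-n^2)/η := by
      rw [le_div_iff₀ hη]; linarith
    have heq : -(1/η) * n^2 = (-n^2)/η := by ring
    rw [heq]; exact hle
  · have : 0 < (1/η) * n^2 := by positivity
    linarith
end

section
/- Let A be a nonempty finite set, π, ρ ∈ Δ(A) with π(a) > 0 and ρ(a) > 0 for all a, q : A → ℝ, η > 0, and α > 0. Then the unique maximizer over π' ∈ Δ(A) of ⟨π', q⟩ − (1/η)·KL(π', π) − α·KL(π', ρ) is given by π⁺(a) ∝ (π(a)·exp(η q(a))·ρ(a)^{ηα})^{1/(1+αη)}. -/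
lemma gibbs_ineq {A : Type} [Fintype A] (p t : A → ℝ) (hp : ∀ a, 0 ≤ p a)
    (ht : ∀ a, 0 < t a) (hps : ∑ a, p a = 1) (hts : ∑ a, t a = 1) :
    0 ≤ ∑ a, p a * Real.log (p a / t a) ∧
      ((∑ a, p a * Real.log (p a / t a)) = 0 → p = t) := by
  have key : ∀ a, p a - t a ≤ p a * Real.log (p a / t a) := by
    intro a
    rcases eq_or_lt_of_le (hp a) with h | h
    · simp [← h]; linarith [(ht a).le]
    · have hlog : Real.log (t a / p a) ≤ t a / p a - 1 :=
        Real.log_le_sub_one_of_pos (div_pos (ht a) h)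
      have hrw : Real.log (p a / t a) = - Real.log (t a / p a) := by
        rw [← Real.log_inv, inv_div]
      rw [hrw]
      have h1 : p a * (t a / p a - 1) = t a - p a := by field_simp
      nlinarith [mul_le_mul_of_nonneg_left hlog h.le]
  have hstrict : ∀ a, p a ≠ t a → p a - t a < p a * Real.log (p a / t a) := by
    intro a hne
    rcases eq_or_lt_of_le (hp a) with h | h
    · simp [← h]; linarith [ht a]
    · have hlog : Real.log (t a / p a) < t a / p a - 1 :=
        Real.log_lt_sub_one_of_pos (div_pos (ht a) h)
          (by intro hc; apply hne; field_simp at hc; linarith)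
      have hrw : Real.log (p a / t a) = - Real.log (t a / p a) := by
        rw [← Real.log_inv, inv_div]
      rw [hrw]
      have h1 : p a * (t a / p a - 1) = t a - p a := by field_simp
      nlinarith [mul_lt_mul_of_pos_left hlog h]
  have hsum0 : ∑ a, (p a - t a) = 0 := by
    rw [Finset.sum_sub_distrib, hps, hts]; ring
  constructor
  · calc (0:ℝ) = ∑ a, (p a - t a) := hsum0.symm
      _ ≤ ∑ a, p a * Real.log (p a / t a) :=
        Finset.sum_le_sum fun a _ => key a
  · intro heq
    by_contra hne
    have ⟨a0, ha0⟩ : ∃ a, p a ≠ t a := by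
      by_contra h; push_neg at h; exact hne (funext h)
    have : ∑ a, (p a - t a) < ∑ a, p a * Real.log (p a / t a) :=
      Finset.sum_lt_sum (fun a _ => key a) ⟨a0, Finset.mem_univ a0, hstrict a0 ha0⟩
    rw [hsum0, heq] at this
    exact lt_irrefl 0 this

/-- The magnetic mirror descent update is the unique maximizer of the doubly
KL-regularized linear objective over the probability simplex. -/
theorem mmd_unique_maximizer {A : Type} [Fintype A] [Nonempty A]
    (π ρ : A → ℝ) (hπ : ∀ a, 0 < π a) (hπsum : ∑ a, π a = 1)
    (hρ : ∀ a, 0 < ρ a) (hρsum : ∑ a, ρ a = 1)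
    (q : A → ℝ) (η α : ℝ) (hη : 0 < η) (hα : 0 < α)
    (KL : (A → ℝ) → (A → ℝ) → ℝ)
    (hKL : ∀ p r, KL p r = ∑ a, p a * Real.log (p a / r a))
    (Z : ℝ)
    (hZ : Z = ∑ a, (π a * Real.exp (η * q a) * ρ a ^ (η * α)) ^ ((1:ℝ)/(1 + α * η)))
    (πp : A → ℝ)
    (hπp : ∀ a, πp a = (π a * Real.exp (η * q a) * ρ a ^ (η * α)) ^ ((1:ℝ)/(1 + α * η)) / Z) :
    ((∀ a, 0 ≤ πp a) ∧ ∑ a, πp a = 1) ∧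
      ∀ p : A → ℝ, (∀ a, 0 ≤ p a) → ∑ a, p a = 1 →
        ((∑ a, p a * q a) - (1/η) * KL p π - α * KL p ρ ≤
            (∑ a, πp a * q a) - (1/η) * KL πp π - α * KL πp ρ ∧
          ((∑ a, p a * q a) - (1/η) * KL p π - α * KL p ρ =
              (∑ a, πp a * q a) - (1/η) * KL πp π - α * KL πp ρ → p = πp)) := by
  have hden : (0:ℝ) < 1 + α * η := by nlinarith
  have hwpos : ∀ a, (0:ℝ) <
      (π a * Real.exp (η * q a) * ρ a ^ (η * α)) ^ ((1:ℝ)/(1 + α * η)) := by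
    intro a
    exact Real.rpow_pos_of_pos
      (mul_pos (mul_pos (hπ a) (Real.exp_pos _)) (Real.rpow_pos_of_pos (hρ a) _)) _
  have hZpos : 0 < Z := by
    rw [hZ]
    exact Finset.sum_pos (fun a _ => hwpos a) Finset.univ_nonempty
  have hπppos : ∀ a, 0 < πp a := fun a => by
    rw [hπp a]; exact div_pos (hwpos a) hZpos
  have hπpsum : ∑ a, πp a = 1 := by
    simp only [hπp]
    rw [← Finset.sum_div, ← hZ, div_self hZpos.ne']
  -- log formula for πp
  have hlogπp : ∀ a, Real.log (πp a) =
      (1/(1 + α * η)) * (Real.log (π a) + η * q a + η * α * Real.log (ρ a))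
        - Real.log Z := by
    intro a
    rw [hπp a, Real.log_div (hwpos a).ne' hZpos.ne',
      Real.log_rpow (mul_pos (mul_pos (hπ a) (Real.exp_pos _)) (Real.rpow_pos_of_pos (hρ a) _)),
      Real.log_mul (mul_pos (hπ a) (Real.exp_pos _)).ne' (Real.rpow_pos_of_pos (hρ a) _).ne',
      Real.log_mul (hπ a).ne' (Real.exp_pos _).ne', Real.log_exp,
      Real.log_rpow (hρ a)]
  set c : ℝ := 1/η + α with hc
  have hcpos : 0 < c := by rw [hc]; positivity
  -- the objective identity
  have hobj : ∀ p : A → ℝ, (∀ a, 0 ≤ p a) → ∑ a, p a = 1 →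
      (∑ a, p a * q a) - (1/η) * KL p π - α * KL p ρ =
        c * Real.log Z - c * ∑ a, p a * Real.log (p a / πp a) := by
    intro p hp hps
    rw [hKL, hKL, Finset.mul_sum, Finset.mul_sum, Finset.mul_sum]
    have : c * Real.log Z = ∑ a, c * Real.log Z * p a := by
      rw [← Finset.mul_sum, hps, mul_one]
    rw [this, ← Finset.sum_sub_distrib, ← Finset.sum_sub_distrib,
      ← Finset.sum_sub_distrib]
    apply Finset.sum_congr rfl
    intro a _
    rcases eq_or_lt_of_le (hp a) with h | h
    · simp [← h]
    · rw [Real.log_div h.ne' (hπ a).ne', Real.log_div h.ne' (hρ a).ne',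
        Real.log_div h.ne' (hπppos a).ne', hlogπp a, hc]
      field_simp
      ring
  have hval : (∑ a, πp a * q a) - (1/η) * KL πp π - α * KL πp ρ = c * Real.log Z := by
    rw [hobj πp (fun a => (hπppos a).le) hπpsum]
    have : ∑ a, πp a * Real.log (πp a / πp a) = 0 := by
      apply Finset.sum_eq_zero; intro a _
      rw [div_self (hπppos a).ne']; simp
    rw [this]; ring
  refine ⟨⟨fun a => (hπppos a).le, hπpsum⟩, fun p hp hps => ?_⟩
  obtain ⟨hge, heq⟩ := gibbs_ineq p πp hp hπppos hps hπpsum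
  rw [hval, hobj p hp hps]
  constructor
  · nlinarith [mul_nonneg hcpos.le hge]
  · intro h
    apply heq
    have h0 : c * ∑ a, p a * Real.log (p a / πp a) = 0 := by linarith
    rcases mul_eq_zero.mp h0 with h1 | h1
    · exact absurd h1 hcpos.ne'
    · exact h1
end
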